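/- arXiv:2005.05161 — 2 statements merged into one kernel-verified Lean document; each statement's English description precedes it below -/
import Mathlib

section
/- Every graph automorphism of Γ₇ maps each of the vertex sets {a₁, b₁}, {a₂, b₂}, and {a₃, b₃} onto itself. -/
/-- The vertices of the graph `Γ₇`. -/
inductive V7 : Type
  | v | a1 | a2 | a3 | b1 | b2 | b3
  deriving DecidableEq

open V7

/-- The graph `Γ₇`: the hexagonal cycle `a₁a₂a₃b₁b₂b₃a₁`, the chords `a₂b₂` and `a₃b₃`,
and the four edges `va₁`, `vb₁`, `va₂`, `vb₂`. -/
def Gamma7 : SimpleGraph V7 :=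
  SimpleGraph.fromEdgeSet
    {s(a1, a2), s(a2, a3), s(a3, b1), s(b1, b2), s(b2, b3), s(b3, a1),
     s(a2, b2), s(a3, b3),
     s(v, a1), s(v, b1), s(v, a2), s(v, b2)}

instance : Fintype V7 := ⟨{v, a1, a2, a3, b1, b2, b3}, fun x => by cases x <;> simp⟩

/-- Boolean adjacency function for `Γ₇`. -/
def adjB : V7 → V7 → Bool
  | a1, a2 => true | a2, a1 => true
  | a2, a3 => true | a3, a2 => true
  | a3, b1 => true | b1, a3 => true
  | b1, b2 => true | b2, b1 => true
  | b2, b3 => true | b3, b2 => true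
  | b3, a1 => true | a1, b3 => true
  | a2, b2 => true | b2, a2 => true
  | a3, b3 => true | b3, a3 => true
  | v, a1 => true | a1, v => true
  | v, b1 => true | b1, v => true
  | v, a2 => true | a2, v => true
  | v, b2 => true | b2, v => true
  | _, _ => false

/-- Boolean equality function on `V7`. -/
def eqB : V7 → V7 → Bool
  | v, v => true | a1, a1 => true | a2, a2 => true | a3, a3 => true
  | b1, b1 => true | b2, b2 => true | b3, b3 => true | _, _ => false

instance : DecidableRel Gamma7.Adj := fun u w =>
  decidable_of_iff
    ((s(u,w) = s(a1,a2) ∨ s(u,w) = s(a2,a3) ∨ s(u,w) = s(a3,b1) ∨ s(u,w) = s(b1,b2) ∨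
      s(u,w) = s(b2,b3) ∨ s(u,w) = s(b3,a1) ∨ s(u,w) = s(a2,b2) ∨ s(u,w) = s(a3,b3) ∨
      s(u,w) = s(v,a1) ∨ s(u,w) = s(v,b1) ∨ s(u,w) = s(v,a2) ∨ s(u,w) = s(v,b2)) ∧ u ≠ w)
    (by simp [Gamma7, SimpleGraph.fromEdgeSet_adj, Set.mem_insert_iff, Set.mem_singleton_iff])

lemma adj_iff_adjB : ∀ u w : V7, Gamma7.Adj u w ↔ adjB u w = true := by decide

lemma eqB_iff : ∀ u w : V7, eqB u w = true ↔ u = w := by decide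

/-- A list of all the vertices. -/
def full : List V7 := [v,a1,a2,a3,b1,b2,b3]

lemma mem_full : ∀ x : V7, x ∈ full := by decide

lemma full_nodup : full.Nodup := by decide

/-- The function determined by a list of values on the vertices in the order of `full`. -/
def fOf (l : List V7) : V7 → V7
  | v => l.getD 0 v | a1 => l.getD 1 v | a2 => l.getD 2 v | a3 => l.getD 3 v
  | b1 => l.getD 4 v | b2 => l.getD 5 v | b3 => l.getD 6 v

/-- If the function of `l` preserves adjacency, then it preserves the three pairs. -/
def check (l : List V7) : Bool :=
  !(full.all fun u => full.all fun w => adjB (fOf l u) (fOf l w) == adjB u w) ||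
  (((eqB (fOf l a1) a1 && eqB (fOf l b1) b1) || (eqB (fOf l a1) b1 && eqB (fOf l b1) a1)) &&
   ((eqB (fOf l a2) a2 && eqB (fOf l b2) b2) || (eqB (fOf l a2) b2 && eqB (fOf l b2) a2)) &&
   ((eqB (fOf l a3) a3 && eqB (fOf l b3) b3) || (eqB (fOf l a3) b3 && eqB (fOf l b3) a3)))

set_option maxRecDepth 100000 in
lemma keyBool : full.permutations'.all check = true := by
  simp only [full, List.permutations', List.all_flatMap]
  decide

lemma key (f : V7 ≃ V7) (hadj : ∀ u w : V7, adjB (f u) (f w) = adjB u w) :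
    ((f a1 = a1 ∧ f b1 = b1) ∨ (f a1 = b1 ∧ f b1 = a1)) ∧
    ((f a2 = a2 ∧ f b2 = b2) ∨ (f a2 = b2 ∧ f b2 = a2)) ∧
    ((f a3 = a3 ∧ f b3 = b3) ∨ (f a3 = b3 ∧ f b3 = a3)) := by
  set l : List V7 := full.map f with hl
  have hfOf : ∀ x : V7, fOf l x = f x := by
    intro x; cases x <;> rfl
  have hperm : l.Perm full := by
    apply List.perm_of_nodup_nodup_toFinset_eq (full_nodup.map f.injective) full_nodup
    ext x
    simp only [List.mem_toFinset, List.mem_map]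
    constructor
    · intro _; exact mem_full x
    · intro _; exact ⟨f.symm x, mem_full _, f.apply_symm_apply x⟩
  have hmem : l ∈ full.permutations' := List.mem_permutations'.mpr hperm
  have hcheck : check l = true := List.all_eq_true.mp keyBool l hmem
  have hpre : (full.all fun u => full.all fun w => adjB (fOf l u) (fOf l w) == adjB u w)
      = true := by
    simp only [List.all_eq_true, beq_iff_eq]
    intro u _ w _
    rw [hfOf, hfOf]; exact hadj u w
  rw [check, hpre] at hcheck
  simp only [Bool.not_true, Bool.false_or, Bool.and_eq_true, Bool.or_eq_true, eqB_iff,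
    hfOf] at hcheck
  exact ⟨hcheck.1.1, hcheck.1.2, hcheck.2⟩

/-- Every graph automorphism of `Γ₇` maps each of the vertex sets `{a₁, b₁}`, `{a₂, b₂}`,
and `{a₃, b₃}` onto itself. -/
theorem automorphism_of_Gamma7_preserves_pairs (φ : Gamma7 ≃g Gamma7) :
    ⇑φ '' ({a1, b1} : Set V7) = {a1, b1} ∧
    ⇑φ '' ({a2, b2} : Set V7) = {a2, b2} ∧
    ⇑φ '' ({a3, b3} : Set V7) = {a3, b3} := by
  have hadj : ∀ u w : V7, adjB (φ u) (φ w) = adjB u w := by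
    intro u w
    have h : adjB (φ u) (φ w) = true ↔ adjB u w = true :=
      (adj_iff_adjB (φ u) (φ w)).symm.trans ((φ.map_adj_iff).trans (adj_iff_adjB u w))
    cases h1 : adjB u w
    · cases h2 : adjB (φ u) (φ w)
      · rfl
      · exact absurd (h.mp h2) (by rw [h1]; simp)
    · exact h.mpr h1
  obtain ⟨h1, h2, h3⟩ := key φ.toEquiv hadj
  have himg : ∀ x y : V7, ⇑φ '' ({x, y} : Set V7) = {φ x, φ y} := by
    intro x y
    rw [Set.image_insert_eq, Set.image_singleton]
  refine ⟨?_, ?_, ?_⟩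
  · rw [himg]
    rcases h1 with ⟨h, h'⟩ | ⟨h, h'⟩
    · rw [show (φ a1 : V7) = a1 from h, show (φ b1 : V7) = b1 from h']
    · rw [show (φ a1 : V7) = b1 from h, show (φ b1 : V7) = a1 from h']
      exact Set.pair_comm b1 a1
  · rw [himg]
    rcases h2 with ⟨h, h'⟩ | ⟨h, h'⟩
    · rw [show (φ a2 : V7) = a2 from h, show (φ b2 : V7) = b2 from h']
    · rw [show (φ a2 : V7) = b2 from h, show (φ b2 : V7) = a2 from h']
      exact Set.pair_comm b2 a2
  · rw [himg]
    rcases h3 with ⟨h, h'⟩ | ⟨h, h'⟩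
    · rw [show (φ a3 : V7) = a3 from h, show (φ b3 : V7) = b3 from h']
    · rw [show (φ a3 : V7) = b3 from h, show (φ b3 : V7) = a3 from h']
      exact Set.pair_comm b3 a3
end

section
/- If G is a connected simple graph that has K₅ as a minor, then ‖G‖ − |G| ≥ 5. -/
open scoped Classical

/-- `H` is a minor of `G`: `H` can be obtained from a subgraph of `G` by contracting edges.
Equivalently (branch-set formulation): there is a family of nonempty, pairwise disjoint,
connected subsets of the vertices of `G`, indexed by the vertices of `H`, such that whenever
two vertices are adjacent in `H` there is an edge of `G` between the corresponding sets. -/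
def IsMinor {W V : Type} (H : SimpleGraph W) (G : SimpleGraph V) : Prop :=
  ∃ B : W → Set V,
    (∀ w, (B w).Nonempty) ∧
    (∀ w, (G.induce (B w)).Connected) ∧
    (∀ w₁ w₂, w₁ ≠ w₂ → Disjoint (B w₁) (B w₂)) ∧
    (∀ w₁ w₂, H.Adj w₁ w₂ → ∃ u ∈ B w₁, ∃ x ∈ B w₂, G.Adj u x)

/-- The complete bipartite graph `K₃,₃`. -/
def K33 : SimpleGraph (Fin 3 ⊕ Fin 3) := completeBipartiteGraph (Fin 3) (Fin 3)

/-- The complete graph `K₅`. -/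
def K5 : SimpleGraph (Fin 5) := ⊤

/-- In a connected graph, from any vertex `v ≠ b` there is a neighbor strictly closer to `b`. -/
lemma aux_descend {V : Type} (G : SimpleGraph V) (hconn : G.Connected) {v b : V}
    (hvb : v ≠ b) : ∃ u, G.Adj v u ∧ G.dist u b + 1 = G.dist v b := by
  obtain ⟨p, hp⟩ := (hconn v b).exists_walk_length_eq_dist
  cases p with
  | nil => exact absurd rfl hvb
  | @cons _ u _ h q =>
    refine ⟨u, h, ?_⟩
    have h1 : G.dist u b ≤ q.length := SimpleGraph.dist_le q
    have h2 : G.dist v b ≤ G.dist v u + G.dist u b := hconn.dist_triangle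
    have h3 : G.dist v u = 1 := SimpleGraph.dist_eq_one_iff_adj.mpr h
    simp only [SimpleGraph.Walk.length_cons] at hp
    omega

/-- A connected graph on a finite vertex type has at least `card V - 1` edges. -/
lemma aux_conn_card {V : Type} [Fintype V] [DecidableEq V] (G : SimpleGraph V)
    [Fintype G.edgeSet] (hconn : G.Connected) :
    Fintype.card V ≤ G.edgeFinset.card + 1 := by
  classical
  have hne : Nonempty V := hconn.nonempty
  obtain ⟨b⟩ := hne
  choose u hadj hdist using fun v (h : v ≠ b) => aux_descend G hconn h
  set f : V → Sym2 V := fun v => if h : v = b then s(v, v) else s(v, u v h) with hf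
  have hinj : Set.InjOn f (Finset.univ.erase b) := by
    intro a₁ h₁ a₂ h₂ heq
    simp only [Finset.coe_erase, Set.mem_diff, Finset.mem_coe, Finset.coe_univ,
      Set.mem_univ, true_and, Set.mem_singleton_iff] at h₁ h₂
    rw [hf] at heq
    simp only [dif_neg h₁, dif_neg h₂, Sym2.eq_iff] at heq
    rcases heq with ⟨h, _⟩ | ⟨ha, hb⟩
    · exact h
    · have d1 := hdist a₁ h₁
      have d2 := hdist a₂ h₂
      rw [hb] at d1
      rw [← ha] at d2
      omega
  have hmem : ∀ a ∈ Finset.univ.erase b, f a ∈ G.edgeFinset := by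
    intro a ha
    have h : a ≠ b := Finset.ne_of_mem_erase ha
    rw [hf]
    simp only [dif_neg h, SimpleGraph.mem_edgeFinset, SimpleGraph.mem_edgeSet]
    exact hadj a h
  have := Finset.card_le_card_of_injOn f hmem hinj
  have hcard : (Finset.univ.erase b).card = Fintype.card V - 1 := by
    rw [Finset.card_erase_of_mem (Finset.mem_univ b), Finset.card_univ]
  have hpos : 0 < Fintype.card V := Fintype.card_pos_iff.mpr ⟨b⟩
  omega

/-- A connected induced subgraph on `s` contributes at least `|s| - 1` edges inside `s`. -/
lemma aux_induced_edges {V : Type} [Fintype V] [DecidableEq V] (G : SimpleGraph V)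
    [Fintype G.edgeSet] (s : Set V) (hc : (G.induce s).Connected) :
    s.toFinset.card ≤ (G.edgeFinset.filter (fun e => ∀ v ∈ e, v ∈ s)).card + 1 := by
  classical
  have h1 : Fintype.card s ≤ (G.induce s).edgeFinset.card + 1 :=
    aux_conn_card (G.induce s) hc
  rw [Set.toFinset_card]
  refine le_trans h1 (by
    have h2 : (G.induce s).edgeFinset.card ≤
        (G.edgeFinset.filter (fun e => ∀ v ∈ e, v ∈ s)).card := by
      apply Finset.card_le_card_of_injOn (Sym2.map Subtype.val)
      · intro e he
        induction e using Sym2.ind with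
        | _ a c =>
          simp only [Finset.mem_coe, SimpleGraph.mem_edgeFinset, SimpleGraph.mem_edgeSet] at he
          have hadj : G.Adj a.val c.val := he
          simp only [Finset.mem_coe, Sym2.map_pair_eq, Finset.mem_filter, SimpleGraph.mem_edgeFinset,
            SimpleGraph.mem_edgeSet, Sym2.mem_iff]
          refine ⟨hadj, ?_⟩
          rintro v (rfl | rfl)
          · exact a.2
          · exact c.2
      · exact Set.injOn_of_injective (Sym2.map.injective Subtype.val_injective)
    omega)

set_option maxHeartbeats 2000000 in
/-- If `G` is a connected finite simple graph that has `K₅` as a minor, then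
`‖G‖ − |G| ≥ 5`, i.e. the number of edges of `G` is at least the number of vertices
plus 5. -/
theorem edges_sub_vertices_ge_five_of_K5_minor
    {V : Type} [Fintype V] (G : SimpleGraph V)
    (hconn : G.Connected) (hminor : IsMinor K5 G) :
    Fintype.card V + 5 ≤ G.edgeSet.ncard := by
  classical
  obtain ⟨B, hBne, hBconn, hBdisj, hBadj⟩ := hminor
  -- membership in two branch sets forces equal indices
  have hsame : ∀ {a : V} {i j : Fin 5}, a ∈ B i → a ∈ B j → i = j := by
    intro a i j hi hj
    by_contra h
    exact Set.disjoint_left.mp (hBdisj i j h) hi hj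
  -- base vertex
  obtain ⟨b, hb⟩ := hBne 0
  -- choice of cross edges
  have hK5 : ∀ (i j : Fin 5), i ≠ j → K5.Adj i j := fun i j h => by
    simpa [K5] using h
  choose cu hcu cx hcx hcadj using fun (i j : Fin 5) (h : i ≠ j) => hBadj i j (hK5 i j h)
  -- edges inside branch sets
  set Ein : Fin 5 → Finset (Sym2 V) :=
    fun i => G.edgeFinset.filter (fun e => ∀ v ∈ e, v ∈ B i) with hEin
  have hEinCard : ∀ i, (B i).toFinset.card ≤ (Ein i).card + 1 :=
    fun i => aux_induced_edges G (B i) (hBconn i)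
  -- the ten cross edges
  set D : Finset (Fin 5 × Fin 5) := Finset.univ.filter (fun p => p.1 < p.2) with hD
  have hDcard : D.card = 10 := by decide
  set g : Fin 5 × Fin 5 → Sym2 V := fun p =>
    if h : p.1 ≠ p.2 then s(cu p.1 p.2 h, cx p.1 p.2 h) else s(b, b) with hg
  set Ecross : Finset (Sym2 V) := D.image g with hEcross
  have hgmem : ∀ p (h : p.1 ≠ p.2), cu p.1 p.2 h ∈ g p ∧ cx p.1 p.2 h ∈ g p ∧
      (∀ v ∈ g p, v = cu p.1 p.2 h ∨ v = cx p.1 p.2 h) := by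
    intro p h
    rw [hg]
    simp only [dif_pos h, Sym2.mem_iff]
    tauto
  have hEcrossCard : Ecross.card = 10 := by
    rw [hEcross, Finset.card_image_of_injOn, hDcard]
    intro p hp q hq heq
    simp only [hD, Finset.mem_coe, Finset.mem_filter, Finset.mem_univ, true_and] at hp hq
    have hp' : p.1 ≠ p.2 := ne_of_lt hp
    have hq' : q.1 ≠ q.2 := ne_of_lt hq
    rw [hg] at heq
    simp only [dif_pos hp', dif_pos hq', Sym2.eq_iff] at heq
    rcases heq with ⟨h1, h2⟩ | ⟨h1, h2⟩
    · have e1 : p.1 = q.1 := hsame (h1 ▸ hcu p.1 p.2 hp') (hcu q.1 q.2 hq')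
      have e2 : p.2 = q.2 := hsame (h2 ▸ hcx p.1 p.2 hp') (hcx q.1 q.2 hq')
      exact Prod.ext e1 e2
    · have e1 : p.1 = q.2 := hsame (h1 ▸ hcu p.1 p.2 hp') (hcx q.1 q.2 hq')
      have e2 : p.2 = q.1 := hsame (h2 ▸ hcx p.1 p.2 hp') (hcu q.1 q.2 hq')
      have : (p.1 : ℕ) < p.2 := hp
      have : (q.1 : ℕ) < q.2 := hq
      rw [e1, e2] at hp
      exact absurd hp (by omega)
  have hEcrossEdge : Ecross ⊆ G.edgeFinset := by
    intro e he
    rw [hEcross] at he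
    obtain ⟨p, hp, rfl⟩ := Finset.mem_image.mp he
    simp only [hD, Finset.mem_filter, Finset.mem_univ, true_and] at hp
    have hp' : p.1 ≠ p.2 := ne_of_lt hp
    rw [hg]
    simp only [dif_pos hp', SimpleGraph.mem_edgeFinset, SimpleGraph.mem_edgeSet]
    exact hcadj p.1 p.2 hp'
  -- the outside vertices
  set Sout : Finset V := Finset.univ.filter (fun v => ∀ i, v ∉ B i) with hSout
  choose w hwadj hwdist using fun v (h : v ≠ b) => aux_descend G hconn h
  set f : V → Sym2 V := fun v => if h : v = b then s(v, v) else s(v, w v h) with hf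
  have houtne : ∀ v ∈ Sout, v ≠ b := by
    intro v hv
    rw [hSout] at hv
    simp only [Finset.mem_filter, Finset.mem_univ, true_and] at hv
    intro h
    exact hv 0 (h ▸ hb)
  set Eout : Finset (Sym2 V) := Sout.image f with hEout
  have hEoutCard : Eout.card = Sout.card := by
    rw [hEout]
    apply Finset.card_image_of_injOn
    intro a₁ h₁ a₂ h₂ heq
    have hb₁ := houtne a₁ h₁
    have hb₂ := houtne a₂ h₂
    rw [hf] at heq
    simp only [dif_neg hb₁, dif_neg hb₂, Sym2.eq_iff] at heq
    rcases heq with ⟨h, _⟩ | ⟨ha, hbb⟩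
    · exact h
    · have d1 := hwdist a₁ hb₁
      have d2 := hwdist a₂ hb₂
      rw [hbb] at d1
      rw [← ha] at d2
      omega
  have hEoutEdge : Eout ⊆ G.edgeFinset := by
    intro e he
    rw [hEout] at he
    obtain ⟨v, hv, rfl⟩ := Finset.mem_image.mp he
    have h := houtne v hv
    rw [hf]
    simp only [dif_neg h, SimpleGraph.mem_edgeFinset, SimpleGraph.mem_edgeSet]
    exact hwadj v h
  -- membership facts for Eout
  have hEoutElt : ∀ e ∈ Eout, ∃ v ∈ e, ∀ i, v ∉ B i := by
    intro e he
    rw [hEout] at he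
    obtain ⟨v, hv, rfl⟩ := Finset.mem_image.mp he
    have h := houtne v hv
    rw [hSout] at hv
    simp only [Finset.mem_filter, Finset.mem_univ, true_and] at hv
    refine ⟨v, ?_, hv⟩
    have hfv : f v = s(v, w v h) := dif_neg h
    rw [hfv]
    exact Sym2.mem_mk_left v _
  -- union of inside edges
  set EinU : Finset (Sym2 V) := Finset.univ.biUnion Ein with hEinU
  have hEinDisj : ∀ i ∈ (Finset.univ : Finset (Fin 5)), ∀ j ∈ Finset.univ,
      i ≠ j → Disjoint (Ein i) (Ein j) := by
    intro i _ j _ hij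
    rw [Finset.disjoint_left]
    intro e hei hej
    rw [hEin] at hei hej
    simp only [Finset.mem_filter] at hei hej
    induction e using Sym2.ind with
    | _ a c =>
      have hai : a ∈ B i := hei.2 a (by simp)
      have haj : a ∈ B j := hej.2 a (by simp)
      exact hij (hsame hai haj)
  have hEinUCard : EinU.card = ∑ i, (Ein i).card := Finset.card_biUnion hEinDisj
  have hEinUEdge : EinU ⊆ G.edgeFinset := by
    intro e he
    rw [hEinU] at he
    obtain ⟨i, _, hei⟩ := Finset.mem_biUnion.mp he
    rw [hEin] at hei
    exact (Finset.mem_filter.mp hei).1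
  -- disjointness between classes
  have hd1 : Disjoint EinU Ecross := by
    rw [Finset.disjoint_left]
    intro e he hc
    rw [hEinU] at he
    obtain ⟨i, _, hei⟩ := Finset.mem_biUnion.mp he
    rw [hEin] at hei
    simp only [Finset.mem_filter] at hei
    rw [hEcross] at hc
    obtain ⟨p, hp, rfl⟩ := Finset.mem_image.mp hc
    simp only [hD, Finset.mem_filter, Finset.mem_univ, true_and] at hp
    have hp' : p.1 ≠ p.2 := ne_of_lt hp
    obtain ⟨hmu, hmx, _⟩ := hgmem p hp'
    have h1 : cu p.1 p.2 hp' ∈ B i := hei.2 _ hmu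
    have h2 : cx p.1 p.2 hp' ∈ B i := hei.2 _ hmx
    exact hp' ((hsame (hcu p.1 p.2 hp') h1).trans (hsame (hcx p.1 p.2 hp') h2).symm)
  have hd2 : Disjoint (EinU ∪ Ecross) Eout := by
    rw [Finset.disjoint_left]
    intro e he ho
    obtain ⟨v, hve, hv⟩ := hEoutElt e ho
    rcases Finset.mem_union.mp he with he | he
    · rw [hEinU] at he
      obtain ⟨i, _, hei⟩ := Finset.mem_biUnion.mp he
      rw [hEin] at hei
      exact hv i ((Finset.mem_filter.mp hei).2 v hve)
    · rw [hEcross] at he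
      obtain ⟨p, hp, rfl⟩ := Finset.mem_image.mp he
      simp only [hD, Finset.mem_filter, Finset.mem_univ, true_and] at hp
      have hp' : p.1 ≠ p.2 := ne_of_lt hp
      obtain ⟨_, _, hall⟩ := hgmem p hp'
      rcases hall v hve with rfl | rfl
      · exact hv p.1 (hcu p.1 p.2 hp')
      · exact hv p.2 (hcx p.1 p.2 hp')
  -- total count
  set A : Finset (Sym2 V) := (EinU ∪ Ecross) ∪ Eout with hA
  have hAcard : A.card = (∑ i, (Ein i).card) + 10 + Sout.card := by
    rw [hA, Finset.card_union_of_disjoint hd2, Finset.card_union_of_disjoint hd1,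
      hEinUCard, hEcrossCard, hEoutCard]
  have hAsub : A ⊆ G.edgeFinset := by
    rw [hA]
    exact Finset.union_subset (Finset.union_subset hEinUEdge hEcrossEdge) hEoutEdge
  have hAle : A.card ≤ G.edgeFinset.card := Finset.card_le_card hAsub
  -- vertex counting
  set Sin : Finset V := Finset.univ.filter (fun v => ∃ i, v ∈ B i) with hSin
  have hVsplit : Sin.card + Sout.card = Fintype.card V := by
    have h := Finset.card_filter_add_card_filter_not
      (s := (Finset.univ : Finset V)) (p := fun v => ∃ i, v ∈ B i)
    have h2 : (Finset.univ.filter (fun v => ¬ ∃ i, v ∈ B i)) = Sout := by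
      ext v
      simp [hSout]
    rw [h2] at h
    rw [hSin, ← Finset.card_univ]
    exact h
  have hSinCard : Sin.card = ∑ i, (B i).toFinset.card := by
    have : Sin = Finset.univ.biUnion (fun i => (B i).toFinset) := by
      ext v
      simp [hSin, Set.mem_toFinset]
    rw [this]
    apply Finset.card_biUnion
    intro i _ j _ hij
    show Disjoint (B i).toFinset (B j).toFinset
    rw [Finset.disjoint_left]
    intro a hai haj
    rw [Set.mem_toFinset] at hai haj
    exact hij (hsame hai haj)
  have hSinLe : Sin.card ≤ (∑ i, (Ein i).card) + 5 := by
    rw [hSinCard]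
    calc ∑ i, (B i).toFinset.card ≤ ∑ i, ((Ein i).card + 1) :=
          Finset.sum_le_sum (fun i _ => hEinCard i)
      _ = (∑ i, (Ein i).card) + 5 := by
          rw [Finset.sum_add_distrib]
          simp
  -- conclude
  have hnc : G.edgeSet.ncard = G.edgeFinset.card := by
    simp [SimpleGraph.edgeFinset, Set.ncard_eq_toFinset_card']
  rw [hnc]
  omega
end
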